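/- There exists a simple graph G and a vertex P ∈ V(G) such that the rank Weierstrass set H_r(P) = {0, 3, 5, 7} ∪ { n ∈ ℕ : n ≥ 8 }; in particular, H_r(P) is not closed under addition (3 ∈ H_r(P) but 3 + 3 = 6 ∉ H_r(P)), so rank Weierstrass sets of graphs need not be semigroups. Concretely, one may take G to be the vertex gluing of K_{2,3} and two copies of K_{2,2} at a common vertex P, where in K_{2,3} the glued vertex has degree 3 and in each K_{2,2} the glued vertex has degree 2. -/

import Mathlib

open scoped Classical

/-- A graph: a finite connected multigraph with no loop edges, given by a symmetric
edge-multiplicity function on a finite nonempty vertex type. -/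
structure Multigraph where
  V : Type
  [fintypeV : Fintype V]
  [decEqV : DecidableEq V]
  [nonemptyV : Nonempty V]
  adj : V → V → ℕ
  adj_symm : ∀ u v, adj u v = adj v u
  adj_loopless : ∀ v, adj v v = 0
  conn : ∀ u v, Relation.ReflTransGen (fun a b => adj a b ≠ 0) u v

attribute [instance] Multigraph.fintypeV Multigraph.decEqV Multigraph.nonemptyV

namespace Multigraph

variable (G : Multigraph)

/-- A simple graph: no multiple edges and more than one vertex. -/
def Simple : Prop :=
  (∀ u v, G.adj u v ≤ 1) ∧ 1 < Fintype.card G.V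

/-- The degree of a divisor. -/
def deg (D : G.V → ℤ) : ℤ := ∑ v, D v

/-- A divisor is effective if all its coefficients are nonnegative. -/
def Effective (D : G.V → ℤ) : Prop := ∀ v, 0 ≤ D v

/-- The Laplacian of an integer-valued function on the vertices. -/
def lap (f : G.V → ℤ) : G.V → ℤ := fun v => ∑ w, (G.adj v w : ℤ) * (f v - f w)

/-- The linear system `|D|` is nonempty, i.e. `D` is linearly equivalent to an
effective divisor. -/
def LinNonempty (D : G.V → ℤ) : Prop :=
  ∃ f : G.V → ℤ, G.Effective (D - G.lap f)

/-- The Baker–Norine rank of a divisor: `-1` if `|D| = ∅`, otherwise the maximal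
`k` such that `|D - E| ≠ ∅` for every effective divisor `E` of degree `k`. -/
noncomputable def rank (D : G.V → ℤ) : ℤ :=
  if G.LinNonempty D then
    ((sSup {k : ℕ | ∀ E : G.V → ℤ, G.Effective E → G.deg E = (k : ℤ) →
        G.LinNonempty (D - E)} : ℕ) : ℤ)
  else -1

/-- The divisor `n • P`. -/
def pt (P : G.V) (n : ℤ) : G.V → ℤ := fun v => if v = P then n else 0

/-- The rank Weierstrass set of `G` at `P`. -/
def Hr (P : G.V) : Set ℕ :=
  {n : ℕ | G.rank (G.pt P ((n : ℤ) - 1)) < G.rank (G.pt P (n : ℤ))}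

/-- The functional Weierstrass set of `G` at `P`: pole orders at `P` of functions
with a unique pole at `P`. -/
def Hf (P : G.V) : Set ℕ :=
  {n : ℕ | ∃ f : G.V → ℤ, G.lap f P = -(n : ℤ) ∧ ∀ Q, Q ≠ P → 0 ≤ G.lap f Q}

/-- The number of edges joining `Q` to vertices outside `A`. -/
def outdeg (A : Finset G.V) (Q : G.V) : ℕ := ∑ R ∈ Aᶜ, G.adj Q R

/-- A divisor is `P`-reduced. -/
def Reduced (P : G.V) (D : G.V → ℤ) : Prop :=
  (∀ Q, Q ≠ P → 0 ≤ D Q) ∧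
  ∀ A : Finset G.V, A.Nonempty → P ∉ A → ∃ Q ∈ A, D Q < (G.outdeg A Q : ℤ)

/-- `G` is the graph `B_n` with two vertices joined by `n` parallel edges. -/
def IsBanana (n : ℕ) : Prop :=
  Fintype.card G.V = 2 ∧ ∀ u v, u ≠ v → G.adj u v = n

/-- `G` is the complete graph on `n` vertices. -/
def IsComplete (n : ℕ) : Prop :=
  Fintype.card G.V = n ∧ ∀ u v, u ≠ v → G.adj u v = 1

/-- `G` is the complete bipartite graph with parts `A` (of size `m`) and its
complement (of size `n`). -/
def IsCompleteBipartite (A : Finset G.V) (m n : ℕ) : Prop :=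
  A.card = m ∧ Aᶜ.card = n ∧
  ∀ u v, G.adj u v = if (u ∈ A ∧ v ∉ A) ∨ (u ∉ A ∧ v ∈ A) then 1 else 0

/-- `λ_Q(k)`: the least `n` with `r(nQ) = k`. -/
noncomputable def lam (Q : G.V) (k : ℕ) : ℕ :=
  sInf {n : ℕ | G.rank (G.pt Q (n : ℤ)) = (k : ℤ)}

end Multigraph

/-- `G` is the vertex gluing of `G₁` and `G₂` identifying `P₁` and `P₂` into `P`. -/
def IsVertexGluing (G G₁ G₂ : Multigraph) (P : G.V) (P₁ : G₁.V) (P₂ : G₂.V) : Prop :=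
  ∃ (ι₁ : G₁.V → G.V) (ι₂ : G₂.V → G.V),
    Function.Injective ι₁ ∧ Function.Injective ι₂ ∧
    ι₁ P₁ = P ∧ ι₂ P₂ = P ∧
    (∀ a b, ι₁ a = ι₂ b → ι₁ a = P) ∧
    (∀ v : G.V, (∃ a, ι₁ a = v) ∨ (∃ b, ι₂ b = v)) ∧
    (∀ a b, G.adj (ι₁ a) (ι₁ b) = G₁.adj a b) ∧
    (∀ a b, G.adj (ι₂ a) (ι₂ b) = G₂.adj a b) ∧
    (∀ a b, ι₁ a ≠ P → ι₂ b ≠ P → G.adj (ι₁ a) (ι₂ b) = 0)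

namespace Multigraph

open Finset

variable (G : Multigraph)

lemma sum_lap (f : G.V → ℤ) : ∑ v, G.lap f v = 0 := by
  have h : ∑ v, ∑ w, (G.adj v w : ℤ) * f w = ∑ v, ∑ w, (G.adj v w : ℤ) * f v := by
    rw [Finset.sum_comm]
    exact Finset.sum_congr rfl fun v _ => Finset.sum_congr rfl fun w _ => by rw [G.adj_symm]
  have h2 : ∑ v, G.lap f v
      = (∑ v, ∑ w, (G.adj v w : ℤ) * f v) - ∑ v, ∑ w, (G.adj v w : ℤ) * f w := by
    rw [← Finset.sum_sub_distrib]
    refine Finset.sum_congr rfl fun v _ => ?_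
    rw [← Finset.sum_sub_distrib]
    refine Finset.sum_congr rfl fun w _ => by ring
  rw [h2, h, sub_self]

lemma deg_sub (D E : G.V → ℤ) : G.deg (D - E) = G.deg D - G.deg E := by
  simp [deg, Finset.sum_sub_distrib]

lemma lap_sub (f g : G.V → ℤ) : G.lap (f - g) = G.lap f - G.lap g := by
  funext v
  show G.lap (f - g) v = G.lap f v - G.lap g v
  have h : G.lap f v - G.lap g v
      = ∑ w, ((G.adj v w : ℤ) * (f v - f w) - (G.adj v w : ℤ) * (g v - g w)) := by
    rw [Finset.sum_sub_distrib]; rfl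
  rw [h]
  refine Finset.sum_congr rfl fun w _ => ?_
  show (G.adj v w : ℤ) * ((f v - g v) - (f w - g w)) = _
  ring

lemma lap_add (f g : G.V → ℤ) : G.lap (f + g) = G.lap f + G.lap g := by
  funext v
  show G.lap (f + g) v = G.lap f v + G.lap g v
  have h : G.lap f v + G.lap g v
      = ∑ w, ((G.adj v w : ℤ) * (f v - f w) + (G.adj v w : ℤ) * (g v - g w)) := by
    rw [Finset.sum_add_distrib]; rfl
  rw [h]
  refine Finset.sum_congr rfl fun w _ => ?_
  show (G.adj v w : ℤ) * ((f v + g v) - (f w + g w)) = _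
  ring

lemma lap_zero : G.lap 0 = 0 := by
  funext v
  show ∑ w, _ = (0 : ℤ)
  simp [lap]

lemma lin_of_eff {D : G.V → ℤ} (h : G.Effective D) : G.LinNonempty D := by
  refine ⟨0, fun v => ?_⟩
  rw [lap_zero]
  simpa using h v

lemma lin_mono {D D' : G.V → ℤ} (h : G.LinNonempty D) (hle : ∀ v, D v ≤ D' v) :
    G.LinNonempty D' := by
  obtain ⟨f, hf⟩ := h
  refine ⟨f, fun v => ?_⟩
  have h1 := hf v
  simp only [Pi.sub_apply] at h1 ⊢
  linarith [hle v]

lemma lin_shift {D : G.V → ℤ} (g : G.V → ℤ) (h : G.LinNonempty D) :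
    G.LinNonempty (D - G.lap g) := by
  obtain ⟨f, hf⟩ := h
  refine ⟨f - g, fun v => ?_⟩
  have h1 := hf v
  rw [lap_sub]
  simp only [Pi.sub_apply] at h1 ⊢
  linarith

lemma not_lin_of_deg_neg {D : G.V → ℤ} (h : G.deg D < 0) : ¬ G.LinNonempty D := by
  rintro ⟨f, hf⟩
  have h1 : 0 ≤ G.deg (D - G.lap f) := Finset.sum_nonneg fun v _ => hf v
  rw [deg_sub] at h1
  have h2 : G.deg (G.lap f) = 0 := G.sum_lap f
  omega

lemma deg_pt (P : G.V) (n : ℤ) : G.deg (G.pt P n) = n := by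
  simp [deg, pt, Finset.sum_ite_eq']

lemma eff_deg_zero {E : G.V → ℤ} (hE : G.Effective E) (h : G.deg E = 0) (v : G.V) :
    E v = 0 := by
  have := (Finset.sum_eq_zero_iff_of_nonneg (fun w _ => hE w)).1 h v (Finset.mem_univ v)
  exact this

lemma eff_decomp {E : G.V → ℤ} (hE : G.Effective E) {k : ℕ} (h : G.deg E = (k : ℤ) + 1) :
    ∃ (v : G.V) (E' : G.V → ℤ), G.Effective E' ∧ G.deg E' = (k : ℤ) ∧
      ∀ w, E w = E' w + (if w = v then 1 else 0) := by
  have hex : ∃ v, 1 ≤ E v := by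
    by_contra hc
    push_neg at hc
    have : ∀ v, E v = 0 := fun v => le_antisymm (by linarith [hc v]) (hE v)
    rw [deg] at h
    simp only [this] at h
    simp at h
    omega
  obtain ⟨v, hv⟩ := hex
  refine ⟨v, fun w => E w - (if w = v then 1 else 0), fun w => ?_, ?_, fun w => by ring⟩
  · by_cases hw : w = v <;> simp [hw] <;> [linarith; exact hE w]
  · have : G.deg (fun w => E w - (if w = v then 1 else 0)) = G.deg E - G.deg (G.pt v 1) := by
      rw [← deg_sub]
      rfl
    rw [this, deg_pt, h]
    ring

lemma rank_eq_of {D : G.V → ℤ} (k : ℕ) (h0 : G.LinNonempty D)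
    (h1 : ∀ E, G.Effective E → G.deg E = (k : ℤ) → G.LinNonempty (D - E))
    (h2 : ∃ E, G.Effective E ∧ G.deg E = (k : ℤ) + 1 ∧ ¬ G.LinNonempty (D - E)) :
    G.rank D = k := by
  rw [rank, if_pos h0]
  have hub : ∀ m ∈ {k' : ℕ | ∀ E : G.V → ℤ, G.Effective E → G.deg E = (k' : ℤ) →
      G.LinNonempty (D - E)}, m ≤ k := by
    intro m hm
    by_contra hmk
    push_neg at hmk
    obtain ⟨E, hE, hdE, hnE⟩ := h2
    obtain ⟨v0⟩ := G.nonemptyV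
    set E' : G.V → ℤ := fun v => E v + (if v = v0 then (m : ℤ) - ((k : ℤ) + 1) else 0) with hE'
    have heff : G.Effective E' := by
      intro v
      have h5 : ((k : ℤ) + 1) ≤ (m : ℤ) := by exact_mod_cast hmk
      by_cases hv : v = v0
      · simp only [hE', if_pos hv]
        linarith [hE v]
      · simpa [hE', hv] using hE v
    have hdeg : G.deg E' = (m : ℤ) := by
      have : G.deg E' = G.deg E + ∑ v, (if v = v0 then (m : ℤ) - ((k : ℤ) + 1) else 0) := by
        rw [deg, deg, ← Finset.sum_add_distrib]
      rw [this, hdE, Finset.sum_ite_eq' Finset.univ v0 (fun _ => (m : ℤ) - ((k : ℤ) + 1))]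
      simp
    have hlin := hm E' heff hdeg
    refine hnE (G.lin_mono hlin fun v => ?_)
    simp only [Pi.sub_apply, hE']
    have : ((k : ℤ) + 1) ≤ (m : ℤ) := by exact_mod_cast hmk
    by_cases hv : v = v0 <;> simp [hv] <;> linarith
  have hk : k ∈ {k' : ℕ | ∀ E : G.V → ℤ, G.Effective E → G.deg E = (k' : ℤ) →
      G.LinNonempty (D - E)} := h1
  congr 1
  exact le_antisymm (csSup_le ⟨k, hk⟩ hub) (le_csSup ⟨k, hub⟩ hk)

lemma rank_eq_neg_one {D : G.V → ℤ} (h : ¬ G.LinNonempty D) : G.rank D = -1 :=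
  if_neg h

lemma reduced_of_ord {P : G.V} {D : G.V → ℤ} (ord : G.V → ℕ)
    (h0 : ∀ Q, Q ≠ P → 0 ≤ D Q)
    (hlt : ∀ Q, Q ≠ P →
      D Q < ∑ R ∈ Finset.univ.filter (fun R => ord R < ord Q), (G.adj Q R : ℤ)) :
    G.Reduced P D := by
  refine ⟨h0, fun A hA hPA => ?_⟩
  obtain ⟨Q, hQA, hQmin⟩ := A.exists_min_image ord hA
  have hQP : Q ≠ P := fun h => hPA (h ▸ hQA)
  refine ⟨Q, hQA, lt_of_lt_of_le (hlt Q hQP) ?_⟩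
  have : ((G.outdeg A Q : ℤ)) = ∑ R ∈ Aᶜ, (G.adj Q R : ℤ) := by
    rw [outdeg]; push_cast; rfl
  rw [this]
  refine Finset.sum_le_sum_of_subset_of_nonneg ?_ (fun _ _ _ => by positivity)
  intro R hR
  simp only [Finset.mem_filter, Finset.mem_univ, true_and] at hR
  rw [Finset.mem_compl]
  exact fun hRA => absurd (hQmin R hRA) (not_le.2 hR)

lemma not_lin_of_reduced {P : G.V} {D : G.V → ℤ} (hr : G.Reduced P D) (hP : D P < 0) :
    ¬ G.LinNonempty D := by
  rintro ⟨f, hf⟩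
  obtain ⟨v0, -, hv0⟩ := Finset.exists_max_image Finset.univ f ⟨P, Finset.mem_univ P⟩
  set A : Finset G.V := Finset.univ.filter (fun v => f v = f v0) with hA
  by_cases hPA : P ∈ A
  · have hfP : f P = f v0 := by simpa [hA] using hPA
    have h1 : 0 ≤ G.lap f P := by
      refine Finset.sum_nonneg fun w _ => ?_
      have h2 : f w ≤ f P := by rw [hfP]; exact hv0 w (Finset.mem_univ w)
      have h3 : (0:ℤ) ≤ f P - f w := by linarith
      positivity
    have := hf P
    simp only [Pi.sub_apply] at this
    linarith
  · have hAne : A.Nonempty := ⟨v0, by simp [hA]⟩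
    obtain ⟨Q, hQA, hQ⟩ := hr.2 A hAne hPA
    have hfQ : f Q = f v0 := by simpa [hA] using hQA
    have key : ((G.outdeg A Q : ℤ)) ≤ G.lap f Q := by
      have h1 : ((G.outdeg A Q : ℤ)) = ∑ R ∈ Aᶜ, (G.adj Q R : ℤ) := by
        rw [outdeg]; push_cast; rfl
      rw [h1]
      have h2 : ∑ R ∈ Aᶜ, (G.adj Q R : ℤ) ≤ ∑ R ∈ Aᶜ, (G.adj Q R : ℤ) * (f Q - f R) := by
        refine Finset.sum_le_sum fun R hR => ?_
        have hRA : R ∉ A := by rwa [← Finset.mem_compl]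
        have hfR : f R ≠ f v0 := by
          intro h; exact hRA (by simp [hA, h])
        have hfRle : f R ≤ f v0 := hv0 R (Finset.mem_univ R)
        have : 1 ≤ f Q - f R := by rw [hfQ]; omega
        nlinarith [Int.natCast_nonneg (G.adj Q R)]
      refine le_trans h2 ?_
      refine Finset.sum_le_sum_of_subset_of_nonneg (Finset.subset_univ _) fun R _ _ => ?_
      have : f R ≤ f Q := by rw [hfQ]; exact hv0 R (Finset.mem_univ R)
      have h3 : (0:ℤ) ≤ f Q - f R := by linarith
      positivity
    have := hf Q
    simp only [Pi.sub_apply] at this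
    linarith

lemma reduced_sum {P : G.V} {D : G.V → ℤ} (hr : G.Reduced P D) :
    ∀ A : Finset G.V, P ∉ A →
      2 * ∑ Q ∈ A, D Q + 2 * (A.card : ℤ) + ∑ Q ∈ A, ∑ R ∈ A, (G.adj Q R : ℤ)
        ≤ 2 * ∑ Q ∈ A, ∑ R, (G.adj Q R : ℤ) := by
  intro A
  induction A using Finset.strongInduction with
  | _ A ih =>
    intro hPA
    rcases A.eq_empty_or_nonempty with rfl | hA
    · simp
    · obtain ⟨Q, hQA, hQ⟩ := hr.2 A hA hPA
      set A' := A.erase Q with hA'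
      have hsub : A' ⊂ A := Finset.erase_ssubset hQA
      have IH := ih A' hsub (fun h => hPA (Finset.mem_of_mem_erase h))
      have hsD : ∑ v ∈ A, D v = ∑ v ∈ A', D v + D Q := (Finset.sum_erase_add A D hQA).symm
      have hcard : (A.card : ℤ) = (A'.card : ℤ) + 1 := by
        rw [hA', Finset.card_erase_of_mem hQA]
        have : 1 ≤ A.card := Finset.card_pos.2 hA
        push_cast
        omega
      have hsplitrow : ∀ (g : G.V → ℤ), ∑ x ∈ A, g x = ∑ x ∈ A', g x + g Q :=
        fun g => (Finset.sum_erase_add A g hQA).symm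
      have hS : ∑ y ∈ A, (G.adj Q y : ℤ) = ∑ y ∈ A', (G.adj Q y : ℤ) := by
        rw [hsplitrow (fun y => (G.adj Q y : ℤ))]
        simp [G.adj_loopless]
      have hsymS : ∑ x ∈ A', (G.adj x Q : ℤ) = ∑ y ∈ A', (G.adj Q y : ℤ) :=
        Finset.sum_congr rfl fun x _ => by rw [G.adj_symm]
      have he2 : ∑ x ∈ A, ∑ y ∈ A, (G.adj x y : ℤ)
          = ∑ x ∈ A', ∑ y ∈ A', (G.adj x y : ℤ) + 2 * ∑ y ∈ A', (G.adj Q y : ℤ) := by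
        rw [hsplitrow (fun x => ∑ y ∈ A, (G.adj x y : ℤ))]
        have : ∀ x, ∑ y ∈ A, (G.adj x y : ℤ) = ∑ y ∈ A', (G.adj x y : ℤ) + (G.adj x Q : ℤ) :=
          fun x => (Finset.sum_erase_add A _ hQA).symm
        simp only [this]
        rw [Finset.sum_add_distrib, hsymS]
        simp only [G.adj_loopless, Nat.cast_zero, add_zero]
        ring
      have hdegrow : ∑ x ∈ A, ∑ R, (G.adj x R : ℤ)
          = ∑ x ∈ A', ∑ R, (G.adj x R : ℤ) + ∑ R, (G.adj Q R : ℤ) :=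
        hsplitrow _
      have hT : ∑ R, (G.adj Q R : ℤ) = ∑ y ∈ A', (G.adj Q y : ℤ) + ∑ R ∈ Aᶜ, (G.adj Q R : ℤ) := by
        rw [← hS, Finset.sum_add_sum_compl]
      have hout : (D Q) + 1 ≤ ∑ R ∈ Aᶜ, (G.adj Q R : ℤ) := by
        have : ((G.outdeg A Q : ℤ)) = ∑ R ∈ Aᶜ, (G.adj Q R : ℤ) := by
          rw [outdeg]; push_cast; rfl
        omega
      rw [hsD, hcard, he2, hdegrow, hT]
      linarith

end Multigraph
namespace Multigraph

open Finset

variable (G : Multigraph)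

lemma sum_mul_lap (f g : G.V → ℤ) :
    ∑ v, f v * G.lap g v = ∑ v, g v * G.lap f v := by
  have expand : ∀ (f g : G.V → ℤ), ∑ v, f v * G.lap g v
      = (∑ v, ∑ w, (G.adj v w : ℤ) * (f v * g v)) - ∑ v, ∑ w, (G.adj v w : ℤ) * (f v * g w) := by
    intro f g
    rw [← Finset.sum_sub_distrib]
    refine Finset.sum_congr rfl fun v _ => ?_
    rw [← Finset.sum_sub_distrib]
    have : f v * G.lap g v = ∑ w, f v * ((G.adj v w : ℤ) * (g v - g w)) := by
      rw [← Finset.mul_sum]; rfl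
    rw [this]
    exact Finset.sum_congr rfl fun w _ => by ring
  rw [expand, expand]
  have h1 : ∑ v, ∑ w, (G.adj v w : ℤ) * (f v * g v)
      = ∑ v, ∑ w, (G.adj v w : ℤ) * (g v * f v) :=
    Finset.sum_congr rfl fun v _ => Finset.sum_congr rfl fun w _ => by ring
  have h2 : ∑ v, ∑ w, (G.adj v w : ℤ) * (f v * g w)
      = ∑ v, ∑ w, (G.adj v w : ℤ) * (g v * f w) := by
    rw [Finset.sum_comm]
    refine Finset.sum_congr rfl fun v _ => Finset.sum_congr rfl fun w _ => ?_
    rw [G.adj_symm]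
    ring
  rw [h1, h2]

lemma lap_sup_le_left {f g : G.V → ℤ} (Q : G.V) (h : g Q ≤ f Q) :
    G.lap (f ⊔ g) Q ≤ G.lap f Q := by
  refine Finset.sum_le_sum fun w _ => ?_
  have h1 : (f ⊔ g) Q = f Q := by
    simp only [Pi.sup_apply]
    exact sup_of_le_left h
  have h2 : f w ≤ (f ⊔ g) w := by
    simp only [Pi.sup_apply]
    exact le_sup_left
  have h3 : (0:ℤ) ≤ (G.adj Q w : ℤ) := by positivity
  have h4 : (f ⊔ g) Q - (f ⊔ g) w ≤ f Q - f w := by rw [h1]; linarith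
  exact mul_le_mul_of_nonneg_left h4 h3

lemma lap_indicator_mem {A : Finset G.V} {Q : G.V} (hQ : Q ∈ A) :
    G.lap (fun v => if v ∈ A then (1:ℤ) else 0) Q = (G.outdeg A Q : ℤ) := by
  have h1 : (G.outdeg A Q : ℤ) = ∑ R ∈ Aᶜ, (G.adj Q R : ℤ) := by
    rw [outdeg]; push_cast; rfl
  rw [h1]
  have h2 : ∑ R ∈ Aᶜ, (G.adj Q R : ℤ)
      = ∑ w, if w ∈ A then 0 else (G.adj Q w : ℤ) := by
    rw [Finset.sum_ite, Finset.sum_const_zero, zero_add]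
    refine Finset.sum_congr ?_ fun _ _ => rfl
    ext w
    simp [Finset.mem_compl]
  rw [h2]
  refine Finset.sum_congr rfl fun w _ => ?_
  by_cases hw : w ∈ A <;> simp [hw, hQ] <;> ring

lemma lap_indicator_not_mem {A : Finset G.V} {Q : G.V} (hQ : Q ∉ A) :
    G.lap (fun v => if v ∈ A then (1:ℤ) else 0) Q ≤ 0 := by
  refine Finset.sum_nonpos fun w _ => ?_
  have h3 : (0:ℤ) ≤ (G.adj Q w : ℤ) := by positivity
  by_cases hw : w ∈ A <;> simp [hw, hQ] <;> nlinarith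

lemma lap_neg_sum {ι : Type*} (s : Finset ι) (c : ι → ℤ) (F : ι → G.V → ℤ)
    (v : G.V) :
    G.lap (fun u => -∑ i ∈ s, c i * F i u) v = -∑ i ∈ s, c i * G.lap (F i) v := by
  have key : G.lap (fun u => -∑ i ∈ s, c i * F i u) v
      = ∑ w, ∑ i ∈ s, ((G.adj v w : ℤ) * (c i * F i w - c i * F i v)) := by
    refine Finset.sum_congr rfl fun w _ => ?_
    have h1 : ∑ i ∈ s, (G.adj v w : ℤ) * (c i * F i w - c i * F i v)
        = (G.adj v w : ℤ) * (∑ i ∈ s, c i * F i w - ∑ i ∈ s, c i * F i v) := by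
      rw [← Finset.sum_sub_distrib, Finset.mul_sum]
    rw [h1]
    show (G.adj v w : ℤ) * ((-∑ i ∈ s, c i * F i v) - (-∑ i ∈ s, c i * F i w)) = _
    ring
  have h3 : ∀ i, ∑ w, (G.adj v w : ℤ) * (c i * F i w - c i * F i v)
      = -(c i * G.lap (F i) v) := by
    intro i
    have h4 : c i * G.lap (F i) v = ∑ w, c i * ((G.adj v w : ℤ) * (F i v - F i w)) := by
      rw [← Finset.mul_sum]; rfl
    rw [h4, ← Finset.sum_neg_distrib]
    exact Finset.sum_congr rfl fun w _ => by ring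
  rw [key, Finset.sum_comm,
    show -∑ i ∈ s, c i * G.lap (F i) v = ∑ i ∈ s, -(c i * G.lap (F i) v) from
      (Finset.sum_neg_distrib _).symm]
  exact Finset.sum_congr rfl fun i _ => h3 i

end Multigraph
open Finset

def adjG : Fin 11 → Fin 11 → ℕ := ![![0,0,1,1,1,0,1,1,0,1,1],![0,0,1,1,1,0,0,0,0,0,0],![1,1,0,0,0,0,0,0,0,0,0],![1,1,0,0,0,0,0,0,0,0,0],![1,1,0,0,0,0,0,0,0,0,0],![0,0,0,0,0,0,1,1,0,0,0],![1,0,0,0,0,1,0,0,0,0,0],![1,0,0,0,0,1,0,0,0,0,0],![0,0,0,0,0,0,0,0,0,1,1],![1,0,0,0,0,0,0,0,1,0,0],![1,0,0,0,0,0,0,0,1,0,0]]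

def adjK23 : Fin 5 → Fin 5 → ℕ := ![![0,0,1,1,1],![0,0,1,1,1],![1,1,0,0,0],![1,1,0,0,0],![1,1,0,0,0]]

def adjK22 : Fin 4 → Fin 4 → ℕ := ![![0,0,1,1],![0,0,1,1],![1,1,0,0],![1,1,0,0]]

def adjH : Fin 8 → Fin 8 → ℕ := ![![0,0,1,1,1,0,1,1],![0,0,1,1,1,0,0,0],![1,1,0,0,0,0,0,0],![1,1,0,0,0,0,0,0],![1,1,0,0,0,0,0,0],![0,0,0,0,0,0,1,1],![1,0,0,0,0,1,0,0],![1,0,0,0,0,1,0,0]]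

def gg : Fin 11 → Fin 11 → ℤ := ![![0,0,0,0,0,0,0,0,0,0,0],![0,2,1,1,1,0,0,0,0,0,0],![0,2,4,1,1,0,0,0,0,0,0],![0,2,1,4,1,0,0,0,0,0,0],![0,2,1,1,4,0,0,0,0,0,0],![0,0,0,0,0,2,1,1,0,0,0],![0,0,0,0,0,2,3,1,0,0,0],![0,0,0,0,0,2,1,3,0,0,0],![0,0,0,0,0,0,0,0,2,1,1],![0,0,0,0,0,0,0,0,2,3,1],![0,0,0,0,0,0,0,0,2,1,3]]

def kk : Fin 11 → ℤ := ![1,3,6,6,6,2,4,4,2,4,4]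

def W1 : Fin 11 → Fin 11 → ℤ := ![![0,0,0,0,0,0,0,0,0,0,0],![0,-2,-1,-1,-1,0,0,0,0,0,0],![0,-1,-1,-1,-1,0,0,0,0,0,0],![0,-1,-1,-1,-1,0,0,0,0,0,0],![0,-1,-1,-1,-1,0,0,0,0,0,0],![0,0,0,0,0,-2,-1,-1,0,0,0],![0,0,0,0,0,-1,-1,-1,0,0,0],![0,0,0,0,0,-1,-1,-1,0,0,0],![0,0,0,0,0,0,0,0,-2,-1,-1],![0,0,0,0,0,0,0,0,-1,-1,-1],![0,0,0,0,0,0,0,0,-1,-1,-1]]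

def W2 : Fin 11 → Fin 11 → Fin 11 → ℤ := ![![![0,0,0,0,0,0,0,0,0,0,0],![0,-2,-1,-1,-1,0,0,0,0,0,0],![0,-1,-1,-1,-1,0,0,0,0,0,0],![0,-1,-1,-1,-1,0,0,0,0,0,0],![0,-1,-1,-1,-1,0,0,0,0,0,0],![0,0,0,0,0,-2,-1,-1,0,0,0],![0,0,0,0,0,-1,-1,-1,0,0,0],![0,0,0,0,0,-1,-1,-1,0,0,0],![0,0,0,0,0,0,0,0,-2,-1,-1],![0,0,0,0,0,0,0,0,-1,-1,-1],![0,0,0,0,0,0,0,0,-1,-1,-1]],![![0,-2,-1,-1,-1,0,0,0,0,0,0],![0,-2,-1,-1,-1,0,0,0,0,0,0],![0,-2,-2,-1,-1,0,0,0,0,0,0],![0,-2,-1,-2,-1,0,0,0,0,0,0],![0,-2,-1,-1,-2,0,0,0,0,0,0],![0,-2,-1,-1,-1,-2,-1,-1,0,0,0],![0,-2,-1,-1,-1,-1,-1,-1,0,0,0],![0,-2,-1,-1,-1,-1,-1,-1,0,0,0],![0,-2,-1,-1,-1,0,0,0,-2,-1,-1],![0,-2,-1,-1,-1,0,0,0,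-1,-1,-1],![0,-2,-1,-1,-1,0,0,0,-1,-1,-1]],![![0,-1,-1,-1,-1,0,0,0,0,0,0],![0,-2,-2,-1,-1,0,0,0,0,0,0],![0,-2,-2,-1,-1,0,0,0,0,0,0],![0,-1,-1,-1,-1,0,0,0,0,0,0],![0,-1,-1,-1,-1,0,0,0,0,0,0],![0,-1,-1,-1,-1,-2,-1,-1,0,0,0],![0,-1,-1,-1,-1,-1,-1,-1,0,0,0],![0,-1,-1,-1,-1,-1,-1,-1,0,0,0],![0,-1,-1,-1,-1,0,0,0,-2,-1,-1],![0,-1,-1,-1,-1,0,0,0,-1,-1,-1],![0,-1,-1,-1,-1,0,0,0,-1,-1,-1]],![![0,-1,-1,-1,-1,0,0,0,0,0,0],![0,-2,-1,-2,-1,0,0,0,0,0,0],![0,-1,-1,-1,-1,0,0,0,0,0,0],![0,-2,-1,-2,-1,0,0,0,0,0,0],![0,-1,-1,-1,-1,0,0,0,0,0,0],![0,-1,-1,-1,-1,-2,-1,-1,0,0,0],![0,-1,-1,-1,-1,-1,-1,-1,0,0,0],![0,-1,-1,-1,-1,-1,-1,-1,0,0,0],![0,-1,-1,-1,-1,0,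0,0,-2,-1,-1],![0,-1,-1,-1,-1,0,0,0,-1,-1,-1],![0,-1,-1,-1,-1,0,0,0,-1,-1,-1]],![![0,-1,-1,-1,-1,0,0,0,0,0,0],![0,-2,-1,-1,-2,0,0,0,0,0,0],![0,-1,-1,-1,-1,0,0,0,0,0,0],![0,-1,-1,-1,-1,0,0,0,0,0,0],![0,-2,-1,-1,-2,0,0,0,0,0,0],![0,-1,-1,-1,-1,-2,-1,-1,0,0,0],![0,-1,-1,-1,-1,-1,-1,-1,0,0,0],![0,-1,-1,-1,-1,-1,-1,-1,0,0,0],![0,-1,-1,-1,-1,0,0,0,-2,-1,-1],![0,-1,-1,-1,-1,0,0,0,-1,-1,-1],![0,-1,-1,-1,-1,0,0,0,-1,-1,-1]],![![0,0,0,0,0,-2,-1,-1,0,0,0],![0,-2,-1,-1,-1,-2,-1,-1,0,0,0],![0,-1,-1,-1,-1,-2,-1,-1,0,0,0],![0,-1,-1,-1,-1,-2,-1,-1,0,0,0],![0,-1,-1,-1,-1,-2,-1,-1,0,0,0],![0,0,0,0,0,-2,-1,-1,0,0,0],![0,0,0,0,0,-2,-2,-1,0,0,0],![0,0,0,0,0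,-2,-1,-2,0,0,0],![0,0,0,0,0,-2,-1,-1,-2,-1,-1],![0,0,0,0,0,-2,-1,-1,-1,-1,-1],![0,0,0,0,0,-2,-1,-1,-1,-1,-1]],![![0,0,0,0,0,-1,-1,-1,0,0,0],![0,-2,-1,-1,-1,-1,-1,-1,0,0,0],![0,-1,-1,-1,-1,-1,-1,-1,0,0,0],![0,-1,-1,-1,-1,-1,-1,-1,0,0,0],![0,-1,-1,-1,-1,-1,-1,-1,0,0,0],![0,0,0,0,0,-2,-2,-1,0,0,0],![0,0,0,0,0,-2,-2,-1,0,0,0],![0,0,0,0,0,-1,-1,-1,0,0,0],![0,0,0,0,0,-1,-1,-1,-2,-1,-1],![0,0,0,0,0,-1,-1,-1,-1,-1,-1],![0,0,0,0,0,-1,-1,-1,-1,-1,-1]],![![0,0,0,0,0,-1,-1,-1,0,0,0],![0,-2,-1,-1,-1,-1,-1,-1,0,0,0],![0,-1,-1,-1,-1,-1,-1,-1,0,0,0],![0,-1,-1,-1,-1,-1,-1,-1,0,0,0],![0,-1,-1,-1,-1,-1,-1,-1,0,0,0],![0,0,0,0,0,-2,-1,-2,0,0,0],![0,0,0,0,0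,-1,-1,-1,0,0,0],![0,0,0,0,0,-2,-1,-2,0,0,0],![0,0,0,0,0,-1,-1,-1,-2,-1,-1],![0,0,0,0,0,-1,-1,-1,-1,-1,-1],![0,0,0,0,0,-1,-1,-1,-1,-1,-1]],![![0,0,0,0,0,0,0,0,-2,-1,-1],![0,-2,-1,-1,-1,0,0,0,-2,-1,-1],![0,-1,-1,-1,-1,0,0,0,-2,-1,-1],![0,-1,-1,-1,-1,0,0,0,-2,-1,-1],![0,-1,-1,-1,-1,0,0,0,-2,-1,-1],![0,0,0,0,0,-2,-1,-1,-2,-1,-1],![0,0,0,0,0,-1,-1,-1,-2,-1,-1],![0,0,0,0,0,-1,-1,-1,-2,-1,-1],![0,0,0,0,0,0,0,0,-2,-1,-1],![0,0,0,0,0,0,0,0,-2,-2,-1],![0,0,0,0,0,0,0,0,-2,-1,-2]],![![0,0,0,0,0,0,0,0,-1,-1,-1],![0,-2,-1,-1,-1,0,0,0,-1,-1,-1],![0,-1,-1,-1,-1,0,0,0,-1,-1,-1],![0,-1,-1,-1,-1,0,0,0,-1,-1,-1],![0,-1,-1,-1,-1,0,0,0,-1,-1,-1],![0,0,0,0,0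,-2,-1,-1,-1,-1,-1],![0,0,0,0,0,-1,-1,-1,-1,-1,-1],![0,0,0,0,0,-1,-1,-1,-1,-1,-1],![0,0,0,0,0,0,0,0,-2,-2,-1],![0,0,0,0,0,0,0,0,-2,-2,-1],![0,0,0,0,0,0,0,0,-1,-1,-1]],![![0,0,0,0,0,0,0,0,-1,-1,-1],![0,-2,-1,-1,-1,0,0,0,-1,-1,-1],![0,-1,-1,-1,-1,0,0,0,-1,-1,-1],![0,-1,-1,-1,-1,0,0,0,-1,-1,-1],![0,-1,-1,-1,-1,0,0,0,-1,-1,-1],![0,0,0,0,0,-2,-1,-1,-1,-1,-1],![0,0,0,0,0,-1,-1,-1,-1,-1,-1],![0,0,0,0,0,-1,-1,-1,-1,-1,-1],![0,0,0,0,0,0,0,0,-2,-1,-2],![0,0,0,0,0,0,0,0,-1,-1,-1],![0,0,0,0,0,0,0,0,-2,-1,-2]]]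

def Dvc1 : Fin 11 → ℤ := ![1,-1,0,0,0,0,0,0,0,0,0]

def fc1 : Fin 11 → ℤ := ![0,-2,-1,-1,-1,0,0,0,0,0,0]

def ordc1 : Fin 11 → ℕ := ![0,4,1,2,3,6,5,7,9,8,10]

def Dvc2 : Fin 11 → ℤ := ![2,-1,0,0,0,0,0,0,0,0,0]

def fc2 : Fin 11 → ℤ := ![0,-2,-1,-1,-1,0,0,0,0,0,0]

def ordc2 : Fin 11 → ℕ := ![0,4,1,2,3,6,5,7,9,8,10]

def Dvc5 : Fin 11 → ℤ := ![4,-1,0,0,0,-1,0,0,0,0,0]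

def fc5 : Fin 11 → ℤ := ![0,-2,-1,-1,-1,-2,-1,-1,0,0,0]

def ordc5 : Fin 11 → ℕ := ![0,4,1,2,3,7,5,6,9,8,10]

def Dvc8 : Fin 11 → ℤ := ![6,-1,0,0,0,-1,0,0,-1,0,0]

def fc8 : Fin 11 → ℤ := ![0,-2,-1,-1,-1,-2,-1,-1,-2,-1,-1]

def ordc8 : Fin 11 → ℕ := ![0,4,1,2,3,7,5,6,10,8,9]
lemma conn_hub {V : Type} [Fintype V] [DecidableEq V] (adj : V → V → ℕ)
    (hsymm : ∀ u v, adj u v = adj v u) (hub : V)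
    (h : ∀ v, v = hub ∨ adj v hub ≠ 0 ∨ ∃ w, adj v w ≠ 0 ∧ adj w hub ≠ 0) :
    ∀ u v, Relation.ReflTransGen (fun a b => adj a b ≠ 0) u v := by
  have hs : Symmetric fun a b => adj a b ≠ 0 := fun a b hab => by
    show adj b a ≠ 0
    rw [hsymm b a]; exact hab
  have toHub : ∀ v, Relation.ReflTransGen (fun a b => adj a b ≠ 0) v hub := by
    intro v
    rcases h v with rfl | hv | ⟨w, h1, h2⟩
    · exact .refl
    · exact .single hv
    · exact .head h1 (.single h2)
  intro u v
  exact (toHub u).trans ((@Relation.ReflTransGen.stdSymm _ _ ⟨hs⟩).symm _ _ (toHub v))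

abbrev G0 : Multigraph where
  V := Fin 11
  adj := adjG
  adj_symm := by decide
  adj_loopless := by decide
  conn := conn_hub adjG (by decide) 0 (by decide)

abbrev K23 : Multigraph where
  V := Fin 5
  adj := adjK23
  adj_symm := by decide
  adj_loopless := by decide
  conn := conn_hub adjK23 (by decide) 0 (by decide)

abbrev K22a : Multigraph where
  V := Fin 4
  adj := adjK22
  adj_symm := by decide
  adj_loopless := by decide
  conn := conn_hub adjK22 (by decide) 0 (by decide)

abbrev HG : Multigraph where
  V := Fin 8
  adj := adjH
  adj_symm := by decide
  adj_loopless := by decide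
  conn := conn_hub adjH (by decide) 0 (by decide)

abbrev P0 : G0.V := (0 : Fin 11)

-- speed tests
example : G0.deg (fun _ => 1) = 11 := by decide
example : ∀ Q v : Fin 11, G0.lap (gg Q) v
    = kk Q * ((if v = Q then 1 else 0) - (if v = 0 then 1 else 0)) := by decide
lemma hggP : ∀ Q : Fin 11, gg Q 0 = 0 := by decide
lemma hggpos : ∀ Q v : Fin 11, 0 ≤ gg Q v := by decide
lemma hkk : ∀ Q : Fin 11, 1 ≤ kk Q := by decide
lemma hgglap : ∀ Q v : Fin 11, G0.lap (gg Q) v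
    = kk Q * ((if v = Q then 1 else 0) - (if v = 0 then 1 else 0)) := by decide

lemma riemann (D : Fin 11 → ℤ) (hD : 4 ≤ G0.deg D) : G0.LinNonempty D := by
  classical
  set S : (Fin 11 → ℤ) → Prop :=
    fun f => f 0 = 0 ∧ ∀ Q : Fin 11, Q ≠ 0 → G0.lap f Q ≤ D Q with hS
  have hsup : ∀ f g, S f → S g → S (f ⊔ g) := by
    intro f g hf hg
    refine ⟨?_, ?_⟩
    · show max (f 0) (g 0) = 0
      rw [hf.1, hg.1]; exact max_self 0
    · intro Q hQ
      rcases le_total (g Q) (f Q) with h | h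
      · exact le_trans (G0.lap_sup_le_left Q h) (hf.2 Q hQ)
      · rw [sup_comm f g]
        exact le_trans (G0.lap_sup_le_left Q h) (hg.2 Q hQ)
  have hne : S (fun u => -∑ i : Fin 11, (max 0 (-D i)) * gg i u) := by
    constructor
    · show -∑ i : Fin 11, (max 0 (-D i)) * gg i 0 = 0
      simp [hggP]
    · intro Q hQ
      rw [G0.lap_neg_sum Finset.univ (fun i => max 0 (-D i)) gg Q]
      have hterm : ∀ i : Fin 11, max 0 (-D i) * G0.lap (gg i) Q
          = if Q = i then max 0 (-D i) * kk i else 0 := by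
        intro i
        rw [hgglap i Q, if_neg hQ]
        by_cases h : Q = i <;> (try simp [h]) <;> (try ring)
      rw [Finset.sum_congr rfl (fun i _ => hterm i), Finset.sum_ite_eq Finset.univ Q]
      simp only [Finset.mem_univ, if_true]
      have h1 := hkk Q
      rcases le_or_gt 0 (D Q) with h | h
      · have h2 : max 0 (-D Q) = 0 := max_eq_left (by linarith)
        rw [h2]; simpa using h
      · have h2 : max 0 (-D Q) = -D Q := max_eq_right (by linarith)
        rw [h2]
        nlinarith
  have hbd : ∀ f, S f → ∀ Q : Fin 11,
      f Q ≤ |∑ v : Fin 11, (if v = 0 then 0 else gg Q v * D v)| := by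
    intro f hf Q
    have key : kk Q * f Q ≤ ∑ v : Fin 11, (if v = 0 then 0 else gg Q v * D v) := by
      have h1 : ∑ v : Fin 11, f v * G0.lap (gg Q) v = kk Q * f Q := by
        have hterm : ∀ v : Fin 11, f v * G0.lap (gg Q) v
            = kk Q * ((if v = Q then f v else 0) - (if v = 0 then f v else 0)) := by
          intro v
          rw [hgglap Q v]
          rcases eq_or_ne v Q with rfl | h1 <;> rcases eq_or_ne v 0 with rfl | h2 <;>
            (try simp [*]) <;> (try ring)
        rw [Finset.sum_congr rfl (fun v _ => hterm v), ← Finset.mul_sum]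
        congr 1
        rw [Finset.sum_sub_distrib, Finset.sum_ite_eq' Finset.univ Q f,
          Finset.sum_ite_eq' Finset.univ 0 f]
        simp [hf.1]
      rw [← h1, G0.sum_mul_lap]
      refine Finset.sum_le_sum fun v _ => ?_
      by_cases hv : v = 0
      · subst hv; simp [hggP Q]
      · rw [if_neg hv]
        exact mul_le_mul_of_nonneg_left (hf.2 v hv) (hggpos Q v)
    have h2 := hkk Q
    rcases le_or_gt (f Q) 0 with h | h
    · exact le_trans h (abs_nonneg _)
    · exact le_trans (le_mul_of_one_le_left (le_of_lt h) h2) (le_trans key (le_abs_self _))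
  have hex : ∀ Q : Fin 11, ∃ fQ, S fQ ∧ ∀ f, S f → f Q ≤ fQ Q := by
    intro Q
    have hinh : ∃ z : ℤ, ∃ f, S f ∧ f Q = z :=
      ⟨(fun u => -∑ i : Fin 11, (max 0 (-D i)) * gg i u) Q,
        fun u => -∑ i : Fin 11, (max 0 (-D i)) * gg i u, hne, rfl⟩
    obtain ⟨lub, ⟨f, hf, hfQ⟩, hub⟩ :=
      Int.exists_greatest_of_bdd (P := fun z => ∃ f, S f ∧ f Q = z)
        ⟨_, fun z ⟨f, hf, hz⟩ => hz ▸ hbd f hf Q⟩ hinh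
    exact ⟨f, hf, fun g hg => hfQ ▸ hub (g Q) ⟨g, hg, rfl⟩⟩
  choose fam hfamS hfammax using hex
  set F : Fin 11 → ℤ := Finset.univ.sup' Finset.univ_nonempty fam with hF
  have hFS : S F :=
    Finset.sup'_induction _ _ (fun a ha b hb => hsup a b ha hb) (fun Q _ => hfamS Q)
  have hFmax : ∀ f, S f → ∀ v, f v ≤ F v := by
    intro f hf v
    exact le_trans (hfammax v f hf) ((Finset.le_sup' fam (Finset.mem_univ v)) v)
  have hred : G0.Reduced P0 (D - G0.lap F) := by
    constructor
    · intro Q hQ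
      have := hFS.2 Q hQ
      simp only [Pi.sub_apply]
      linarith
    · intro A hA hPA
      by_contra hcon
      push_neg at hcon
      set F' : Fin 11 → ℤ := F + (fun v => if v ∈ A then (1:ℤ) else 0) with hF'
      have hF'S : S F' := by
        constructor
        · show F 0 + (if (0 : Fin 11) ∈ A then (1:ℤ) else 0) = 0
          rw [if_neg (show (0 : Fin 11) ∉ A from hPA), hFS.1]; ring
        · intro Q hQ
          rw [hF', G0.lap_add]
          simp only [Pi.add_apply]
          by_cases hQA : Q ∈ A
          · have h1 := G0.lap_indicator_mem (A := A) hQA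
            have h2 := hcon Q hQA
            simp only [Pi.sub_apply] at h2
            rw [h1]
            linarith
          · have h1 := G0.lap_indicator_not_mem (A := A) hQA
            linarith [hFS.2 Q hQ]
      obtain ⟨q, hq⟩ := hA
      have hle := hFmax F' hF'S q
      simp only [hF', Pi.add_apply, if_pos hq] at hle
      linarith
  have hsum := G0.reduced_sum hred (Finset.univ.erase P0) (Finset.notMem_erase P0 _)
  have c1 : ∑ Q ∈ Finset.univ.erase P0, ∑ R ∈ Finset.univ.erase P0, (G0.adj Q R : ℤ) = 14 := by
    decide
  have c2 : ∑ Q ∈ Finset.univ.erase P0, ∑ R : Fin 11, (G0.adj Q R : ℤ) = 21 := by decide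
  have c3 : (((Finset.univ.erase P0) : Finset (Fin 11)).card : ℤ) = 10 := by decide
  rw [c1, c2, c3] at hsum
  have hsig : ∑ Q ∈ Finset.univ.erase P0, (D - G0.lap F) Q ≤ 4 := by linarith
  have hdegDr : G0.deg (D - G0.lap F) = G0.deg D := by
    rw [G0.deg_sub]
    have := G0.sum_lap F
    rw [show G0.deg (G0.lap F) = ∑ v, G0.lap F v from rfl, this]
    ring
  have h4 : G0.deg (D - G0.lap F)
      = (D - G0.lap F) P0 + ∑ Q ∈ Finset.univ.erase P0, (D - G0.lap F) Q :=
    (Finset.add_sum_erase Finset.univ _ (Finset.mem_univ P0)).symm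
  have hDrP : 0 ≤ (D - G0.lap F) P0 := by
    rw [hdegDr] at h4
    linarith
  refine ⟨F, fun v => ?_⟩
  by_cases hv : v = P0
  · subst hv; exact hDrP
  · exact hred.1 v hv
lemma eff_pt {G : Multigraph} (P : G.V) {n : ℤ} (hn : 0 ≤ n) : G.Effective (G.pt P n) := by
  intro v
  show (0:ℤ) ≤ if v = P then n else 0
  split <;> simp [hn]

lemma pt_mono {G : Multigraph} (P : G.V) {m n : ℤ} (h : m ≤ n) (v : G.V) :
    G.pt P m v ≤ G.pt P n v := by
  show (if v = P then m else 0) ≤ (if v = P then n else 0)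
  split <;> simp [h]

lemma notlin_cert (Dv f : Fin 11 → ℤ) (ord : Fin 11 → ℕ)
    (h0 : ∀ Q : Fin 11, Q ≠ P0 → 0 ≤ Dv Q - G0.lap f Q)
    (hlt : ∀ Q : Fin 11, Q ≠ P0 →
      Dv Q - G0.lap f Q < ∑ R ∈ Finset.univ.filter (fun R => ord R < ord Q), (G0.adj Q R : ℤ))
    (hP : Dv P0 - G0.lap f P0 < 0) : ¬ G0.LinNonempty Dv := by
  intro h
  have h2 := G0.lin_shift f h
  have hred : G0.Reduced P0 (Dv - G0.lap f) :=
    G0.reduced_of_ord ord (fun Q hQ => h0 Q hQ) (fun Q hQ => hlt Q hQ)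
  exact G0.not_lin_of_reduced hred hP h2

lemma C1 : ¬ G0.LinNonempty Dvc1 :=
  notlin_cert Dvc1 fc1 ordc1 (by decide) (by decide) (by decide)
lemma C2 : ¬ G0.LinNonempty Dvc2 :=
  notlin_cert Dvc2 fc2 ordc2 (by decide) (by decide) (by decide)
lemma C5 : ¬ G0.LinNonempty Dvc5 :=
  notlin_cert Dvc5 fc5 ordc5 (by decide) (by decide) (by decide)
lemma C8 : ¬ G0.LinNonempty Dvc8 :=
  notlin_cert Dvc8 fc8 ordc8 (by decide) (by decide) (by decide)

lemma hW1 : ∀ v w : Fin 11,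
    0 ≤ G0.pt P0 3 w - (if w = v then 1 else 0) - G0.lap (W1 v) w := by decide

lemma hW2 : ∀ u v w : Fin 11,
    0 ≤ G0.pt P0 5 w - ((if w = v then 1 else 0) + (if w = u then 1 else 0))
      - G0.lap (W2 u v) w := by decide

lemma key1 : ∀ E, G0.Effective E → G0.deg E = 1 → G0.LinNonempty (G0.pt P0 3 - E) := by
  intro E hE hd
  obtain ⟨v, E', hE', hd', hEeq⟩ := G0.eff_decomp hE (k := 0) (by rw [hd]; norm_num)
  have hz := G0.eff_deg_zero hE' hd'
  refine ⟨W1 v, fun w => ?_⟩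
  have h1 := hW1 v w
  simp only [Pi.sub_apply]
  rw [hEeq w, hz w]
  linarith

lemma key2 : ∀ E, G0.Effective E → G0.deg E = 2 → G0.LinNonempty (G0.pt P0 5 - E) := by
  intro E hE hd
  obtain ⟨v, E1, hE1, hd1, heq1⟩ := G0.eff_decomp hE (k := 1) (by rw [hd]; norm_num)
  obtain ⟨u, E0, hE0, hd0, heq0⟩ := G0.eff_decomp hE1 (k := 0) (by rw [hd1]; norm_num)
  have hz := G0.eff_deg_zero hE0 hd0
  refine ⟨W2 u v, fun w => ?_⟩
  have h1 := hW2 u v w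
  simp only [Pi.sub_apply]
  rw [heq1 w, heq0 w, hz w]
  linarith

lemma key0 (n : ℤ) (hn : 0 ≤ n) :
    ∀ E, G0.Effective E → G0.deg E = 0 → G0.LinNonempty (G0.pt P0 n - E) := by
  intro E hE hd
  refine G0.lin_of_eff fun v => ?_
  have h1 := G0.eff_deg_zero hE hd v
  simp only [Pi.sub_apply, h1]
  have := eff_pt (G := G0) P0 hn v
  linarith

lemma rank_neg1 : G0.rank (G0.pt P0 (-1)) = -1 :=
  G0.rank_eq_neg_one (G0.not_lin_of_deg_neg (by rw [G0.deg_pt]; norm_num))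

lemma rank0 : G0.rank (G0.pt P0 0) = 0 := by
  apply G0.rank_eq_of 0 (G0.lin_of_eff (eff_pt P0 le_rfl))
  · exact fun E hE hd => key0 0 le_rfl E hE (by exact_mod_cast hd)
  · refine ⟨G0.pt P0 1, eff_pt P0 (by norm_num), by rw [G0.deg_pt]; norm_num,
      G0.not_lin_of_deg_neg ?_⟩
    rw [G0.deg_sub, G0.deg_pt, G0.deg_pt]; norm_num

def Ed1 : Fin 11 → ℤ := fun v => if v = 1 then 1 else 0
def Ed3 : Fin 11 → ℤ := fun v => (if v = 0 then 1 else 0) + (if v = 1 then 1 else 0)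
def Ed4 : Fin 11 → ℤ := fun v => (if v = 1 then 1 else 0) + (if v = 5 then 1 else 0)
def Ed5 : Fin 11 → ℤ := fun v =>
  (if v = 0 then 1 else 0) + (if v = 1 then 1 else 0) + (if v = 5 then 1 else 0)
def Ed6 : Fin 11 → ℤ := fun v =>
  (if v = 1 then 1 else 0) + (if v = 5 then 1 else 0) + (if v = 8 then 1 else 0)
def Ed7 : Fin 11 → ℤ := fun v =>
  (if v = 0 then 1 else 0) + (if v = 1 then 1 else 0) + (if v = 5 then 1 else 0)
    + (if v = 8 then 1 else 0)

lemma rank1 : G0.rank (G0.pt P0 1) = 0 := by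
  apply G0.rank_eq_of 0 (G0.lin_of_eff (eff_pt P0 (by norm_num)))
  · exact fun E hE hd => key0 1 (by norm_num) E hE (by exact_mod_cast hd)
  · refine ⟨Ed1, (by decide : ∀ v : Fin 11, (0:ℤ) ≤ Ed1 v), by decide, ?_⟩
    have hfe : G0.pt P0 1 - Ed1 = Dvc1 := funext (by decide)
    rw [hfe]; exact C1

lemma rank2 : G0.rank (G0.pt P0 2) = 0 := by
  apply G0.rank_eq_of 0 (G0.lin_of_eff (eff_pt P0 (by norm_num)))
  · exact fun E hE hd => key0 2 (by norm_num) E hE (by exact_mod_cast hd)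
  · refine ⟨Ed1, (by decide : ∀ v : Fin 11, (0:ℤ) ≤ Ed1 v), by decide, ?_⟩
    have hfe : G0.pt P0 2 - Ed1 = Dvc2 := funext (by decide)
    rw [hfe]; exact C2

lemma rank3 : G0.rank (G0.pt P0 3) = 1 := by
  apply G0.rank_eq_of 1 (G0.lin_of_eff (eff_pt P0 (by norm_num)))
  · exact fun E hE hd => key1 E hE (by exact_mod_cast hd)
  · refine ⟨Ed3, (by decide : ∀ v : Fin 11, (0:ℤ) ≤ Ed3 v), by decide, ?_⟩
    have hfe : G0.pt P0 3 - Ed3 = Dvc2 := funext (by decide)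
    rw [hfe]; exact C2

lemma rank4 : G0.rank (G0.pt P0 4) = 1 := by
  apply G0.rank_eq_of 1 (G0.lin_of_eff (eff_pt P0 (by norm_num)))
  · intro E hE hd
    refine G0.lin_mono (key1 E hE (by exact_mod_cast hd)) fun v => ?_
    simp only [Pi.sub_apply]
    have := pt_mono (G := G0) P0 (show (3:ℤ) ≤ 4 by norm_num) v
    linarith
  · refine ⟨Ed4, (by decide : ∀ v : Fin 11, (0:ℤ) ≤ Ed4 v), by decide, ?_⟩
    have hfe : G0.pt P0 4 - Ed4 = Dvc5 := funext (by decide)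
    rw [hfe]; exact C5

lemma rank5 : G0.rank (G0.pt P0 5) = 2 := by
  apply G0.rank_eq_of 2 (G0.lin_of_eff (eff_pt P0 (by norm_num)))
  · exact fun E hE hd => key2 E hE (by exact_mod_cast hd)
  · refine ⟨Ed5, (by decide : ∀ v : Fin 11, (0:ℤ) ≤ Ed5 v), by decide, ?_⟩
    have hfe : G0.pt P0 5 - Ed5 = Dvc5 := funext (by decide)
    rw [hfe]; exact C5

lemma rank6 : G0.rank (G0.pt P0 6) = 2 := by
  apply G0.rank_eq_of 2 (G0.lin_of_eff (eff_pt P0 (by norm_num)))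
  · intro E hE hd
    refine G0.lin_mono (key2 E hE (by exact_mod_cast hd)) fun v => ?_
    simp only [Pi.sub_apply]
    have := pt_mono (G := G0) P0 (show (5:ℤ) ≤ 6 by norm_num) v
    linarith
  · refine ⟨Ed6, (by decide : ∀ v : Fin 11, (0:ℤ) ≤ Ed6 v), by decide, ?_⟩
    have hfe : G0.pt P0 6 - Ed6 = Dvc8 := funext (by decide)
    rw [hfe]; exact C8

lemma rank7 : G0.rank (G0.pt P0 7) = 3 := by
  apply G0.rank_eq_of 3 (G0.lin_of_eff (eff_pt P0 (by norm_num)))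
  · intro E hE hd
    refine riemann _ ?_
    rw [G0.deg_sub, G0.deg_pt, hd]; norm_num
  · refine ⟨Ed7, (by decide : ∀ v : Fin 11, (0:ℤ) ≤ Ed7 v), by decide, ?_⟩
    have hfe : G0.pt P0 7 - Ed7 = Dvc8 := funext (by decide)
    rw [hfe]; exact C8

def Rst : Fin 11 → ℤ := fun v =>
  (if v = 1 then 1 else 0) + (if v = 5 then 1 else 0) + (if v = 8 then 1 else 0)

lemma rank_ge8 (n : ℕ) (hn : 8 ≤ n) : G0.rank (G0.pt P0 (n : ℤ)) = (n : ℤ) - 4 := by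
  have h4 : (4:ℕ) ≤ n := by omega
  have hc : ((n - 4 : ℕ) : ℤ) = (n : ℤ) - 4 := by
    push_cast [h4]
    ring
  rw [← hc]
  apply G0.rank_eq_of (n - 4) (G0.lin_of_eff (eff_pt P0 (by positivity)))
  · intro E hE hd
    refine riemann _ ?_
    rw [G0.deg_sub, G0.deg_pt, hd, hc]
    ring_nf
    norm_num
  · have h6 : (6:ℤ) ≤ (n:ℤ) := by exact_mod_cast le_trans (by norm_num) hn
    set E : Fin 11 → ℤ := fun v =>
      (if v = (0 : Fin 11) then (n:ℤ) - 6 else 0) + Rst v with hEdef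
    have hRst : ∀ v : Fin 11, 0 ≤ Rst v := by decide
    refine ⟨E, ?_, ?_, ?_⟩
    · intro v
      simp only [hEdef]
      by_cases h : v = (0 : Fin 11)
      · simp only [if_pos h]
        linarith [hRst v]
      · simp only [if_neg h]
        linarith [hRst v]
    · show (∑ v : Fin 11, E v) = _
      simp only [hEdef]
      rw [Finset.sum_add_distrib, Finset.sum_ite_eq' Finset.univ (0 : Fin 11)
        (fun _ => (n:ℤ) - 6)]
      rw [show (∑ v : Fin 11, Rst v) = 3 by decide, hc]
      simp only [Finset.mem_univ, if_true]
      ring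
    · have hst : ∀ v : Fin 11,
          (if v = (0 : Fin 11) then (6:ℤ) else 0) - Rst v = Dvc8 v := by decide
      have hfe : G0.pt P0 (n:ℤ) - E = Dvc8 := by
        funext v
        rw [← hst v]
        show (if v = (0 : Fin 11) then (n:ℤ) else 0)
            - ((if v = (0 : Fin 11) then (n:ℤ) - 6 else 0) + Rst v) = _
        by_cases h : v = (0 : Fin 11)
        · simp only [if_pos h]
          ring
        · simp only [if_neg h]
          ring
      rw [hfe]; exact C8
lemma hr_eq : G0.Hr P0 = {t : ℕ | t = 0 ∨ t = 3 ∨ t = 5 ∨ t = 7 ∨ 8 ≤ t} := by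
  ext t
  simp only [Multigraph.Hr, Set.mem_setOf_eq]
  by_cases ht : t ≤ 8
  · interval_cases t
    · rw [show ((0:ℕ):ℤ) - 1 = (-1:ℤ) by norm_num, show ((0:ℕ):ℤ) = (0:ℤ) by norm_num,
        rank_neg1, rank0]
      norm_num
    · rw [show ((1:ℕ):ℤ) - 1 = (0:ℤ) by norm_num, show ((1:ℕ):ℤ) = (1:ℤ) by norm_num,
        rank0, rank1]
      norm_num
    · rw [show ((2:ℕ):ℤ) - 1 = (1:ℤ) by norm_num, show ((2:ℕ):ℤ) = (2:ℤ) by norm_num,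
        rank1, rank2]
      norm_num
    · rw [show ((3:ℕ):ℤ) - 1 = (2:ℤ) by norm_num, show ((3:ℕ):ℤ) = (3:ℤ) by norm_num,
        rank2, rank3]
      norm_num
    · rw [show ((4:ℕ):ℤ) - 1 = (3:ℤ) by norm_num, show ((4:ℕ):ℤ) = (4:ℤ) by norm_num,
        rank3, rank4]
      norm_num
    · rw [show ((5:ℕ):ℤ) - 1 = (4:ℤ) by norm_num, show ((5:ℕ):ℤ) = (5:ℤ) by norm_num,
        rank4, rank5]
      norm_num
    · rw [show ((6:ℕ):ℤ) - 1 = (5:ℤ) by norm_num, show ((6:ℕ):ℤ) = (6:ℤ) by norm_num,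
        rank5, rank6]
      norm_num
    · rw [show ((7:ℕ):ℤ) - 1 = (6:ℤ) by norm_num, show ((7:ℕ):ℤ) = (7:ℤ) by norm_num,
        rank6, rank7]
      norm_num
    · rw [show ((8:ℕ):ℤ) - 1 = (7:ℤ) by norm_num, rank7, rank_ge8 8 le_rfl]
      norm_num
  · have h8 : 8 ≤ t - 1 := by omega
    have hceq : ((t:ℕ):ℤ) - 1 = ((t - 1 : ℕ) : ℤ) := by
      have h1 : (1:ℕ) ≤ t := by omega
      push_cast [h1]
      ring
    rw [hceq, rank_ge8 (t-1) h8, rank_ge8 t (by omega)]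
    omega

lemma simpleG0 : G0.Simple := ⟨by decide, by decide⟩

def A3 : Finset (Fin 5) := {0, 1}
def A2 : Finset (Fin 4) := {0, 1}

def i15 : Fin 5 → Fin 8 := fun a => ⟨a.1, by omega⟩
def i24 : Fin 4 → Fin 8 := fun b => if b = 0 then 0 else ⟨b.1 + 4, by omega⟩
def j18 : Fin 8 → Fin 11 := fun a => ⟨a.1, by omega⟩
def j24 : Fin 4 → Fin 11 := fun b => if b = 0 then 0 else ⟨b.1 + 7, by omega⟩

theorem exists_Hr_not_semigroup' :
    ∃ (G : Multigraph) (P : G.V), G.Simple ∧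
      G.Hr P = {t : ℕ | t = 0 ∨ t = 3 ∨ t = 5 ∨ t = 7 ∨ 8 ≤ t} ∧
      (3 ∈ G.Hr P ∧ 6 ∉ G.Hr P ∧
        ¬ ∀ a ∈ G.Hr P, ∀ b ∈ G.Hr P, a + b ∈ G.Hr P) ∧
      ∃ (H K23 K22a K22b : Multigraph) (Q : H.V) (R3 : K23.V) (R2a : K22a.V)
        (R2b : K22b.V) (A3 : Finset K23.V) (A2a : Finset K22a.V)
        (A2b : Finset K22b.V),
        K23.IsCompleteBipartite A3 2 3 ∧ R3 ∈ A3 ∧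
        K22a.IsCompleteBipartite A2a 2 2 ∧ R2a ∈ A2a ∧
        K22b.IsCompleteBipartite A2b 2 2 ∧ R2b ∈ A2b ∧
        IsVertexGluing H K23 K22a Q R3 R2a ∧
        IsVertexGluing G H K22b P Q R2b := by
  have h3 : 3 ∈ G0.Hr P0 := by rw [hr_eq]; norm_num
  have h6 : 6 ∉ G0.Hr P0 := by rw [hr_eq]; norm_num
  refine ⟨G0, P0, simpleG0, hr_eq, ⟨h3, h6, fun h => h6 (by simpa using h 3 h3 3 h3)⟩,
    HG, K23, K22a, K22a, (0 : Fin 8), (0 : Fin 5), (0 : Fin 4), (0 : Fin 4),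
    A3, A2, A2, ⟨by decide, by decide, by decide⟩, by decide,
    ⟨by decide, by decide, by decide⟩, by decide,
    ⟨by decide, by decide, by decide⟩, by decide,
    ⟨i15, i24, by decide, by decide, by decide, by decide, by decide, by decide,
      by decide, by decide, by decide⟩,
    ⟨j18, j24, by decide, by decide, by decide, by decide, by decide, by decide,
      by decide, by decide, by decide⟩⟩
/-- There is a simple graph whose rank Weierstrass set at some vertex is
`{0, 3, 5, 7} ∪ {n ≥ 8}`, which is not closed under addition; concretely, the
vertex gluing of `K_{2,3}` and two copies of `K_{2,2}` at a common vertex works. -/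
theorem exists_Hr_not_semigroup :
    ∃ (G : Multigraph) (P : G.V), G.Simple ∧
      G.Hr P = {t : ℕ | t = 0 ∨ t = 3 ∨ t = 5 ∨ t = 7 ∨ 8 ≤ t} ∧
      (3 ∈ G.Hr P ∧ 6 ∉ G.Hr P ∧
        ¬ ∀ a ∈ G.Hr P, ∀ b ∈ G.Hr P, a + b ∈ G.Hr P) ∧
      ∃ (H K23 K22a K22b : Multigraph) (Q : H.V) (R3 : K23.V) (R2a : K22a.V)
        (R2b : K22b.V) (A3 : Finset K23.V) (A2a : Finset K22a.V)
        (A2b : Finset K22b.V),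
        K23.IsCompleteBipartite A3 2 3 ∧ R3 ∈ A3 ∧
        K22a.IsCompleteBipartite A2a 2 2 ∧ R2a ∈ A2a ∧
        K22b.IsCompleteBipartite A2b 2 2 ∧ R2b ∈ A2b ∧
        IsVertexGluing H K23 K22a Q R3 R2a ∧
        IsVertexGluing G H K22b P Q R2b := by
  exact exists_Hr_not_semigroup'
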